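/- (Definability of classes of world-pointed models) Let P be a finite set of atomic propositions. A class C of world-pointed inquisitive modal models over P is definable in InqML (i.e., there is an InqML formula φ with C = { (M,w) : M,w ⊨ φ }) if and only if C is closed under ~^n for some n ∈ ℕ (i.e., whenever (M,w) ∈ C and M,w ~^n M',w', then (M',w') ∈ C). -/

import Mathlib

/-- Formulas of inquisitive modal logic InqML over atomic propositions `P`. -/
inductive InqForm (P : Type) : Type
  | atom : P → InqForm P
  | bot : InqForm P
  | and : InqForm P → InqForm P → InqForm P
  | impl : InqForm P → InqForm P → InqForm P
  | idisj : InqForm P → InqForm P → InqForm P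
  | box : InqForm P → InqForm P
  | boxplus : InqForm P → InqForm P

/-- An inquisitive modal model `M = ⟨W, Σ, V⟩`. -/
structure InqModel (P : Type) where
  W : Type
  Sig : W → Set (Set W)
  Sig_nonempty : ∀ w, (Sig w).Nonempty
  Sig_downward : ∀ w, ∀ s ∈ Sig w, ∀ t ⊆ s, t ∈ Sig w
  V : P → Set W

/-- `σ(w) = ⋃ Σ(w)`. -/
def InqModel.sigma {P : Type} (M : InqModel P) (w : M.W) : Set M.W :=
  ⋃₀ M.Sig w

/-- Support of a formula at an information state `s ⊆ W`. -/
def support {P : Type} (M : InqModel P) : InqForm P → Set M.W → Prop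
  | .atom p, s => s ⊆ M.V p
  | .bot, s => s = ∅
  | .and φ ψ, s => support M φ s ∧ support M ψ s
  | .impl φ ψ, s => ∀ t ⊆ s, support M φ t → support M ψ t
  | .idisj φ ψ, s => support M φ s ∨ support M ψ s
  | .box φ, s => ∀ w ∈ s, support M φ (M.sigma w)
  | .boxplus φ, s => ∀ w ∈ s, ∀ t ∈ M.Sig w, support M φ t

/-- Truth at a world: `M,w ⊨ φ` iff `M,{w} ⊨ φ`. -/
def truth {P : Type} (M : InqModel P) (w : M.W) (φ : InqForm P) : Prop :=
  support M φ {w}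

/-- Modal depth: maximal nesting depth of `□` and `⊞`. -/
def mdepth {P : Type} : InqForm P → ℕ
  | .atom _ => 0
  | .bot => 0
  | .and φ ψ => max (mdepth φ) (mdepth ψ)
  | .impl φ ψ => max (mdepth φ) (mdepth ψ)
  | .idisj φ ψ => max (mdepth φ) (mdepth ψ)
  | .box φ => mdepth φ + 1
  | .boxplus φ => mdepth φ + 1

/-- Lift of a relation between worlds to sets of worlds: every world on either
side is related to some world on the other side. -/
def StateRel {W W' : Type} (Z : W → W' → Prop) (s : Set W) (s' : Set W') : Prop :=
  (∀ w ∈ s, ∃ w' ∈ s', Z w w') ∧ (∀ w' ∈ s', ∃ w ∈ s, Z w w')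

/-- `n`-bisimilarity between worlds of two inquisitive modal models. -/
def NBisimW {P : Type} (M M' : InqModel P) : ℕ → M.W → M'.W → Prop
  | 0, w, w' => ∀ p : P, w ∈ M.V p ↔ w' ∈ M'.V p
  | n + 1, w, w' => (∀ p : P, w ∈ M.V p ↔ w' ∈ M'.V p) ∧
      (∀ s ∈ M.Sig w, ∃ s' ∈ M'.Sig w', StateRel (NBisimW M M' n) s s') ∧
      (∀ s' ∈ M'.Sig w', ∃ s ∈ M.Sig w, StateRel (NBisimW M M' n) s s')

/-- `n`-bisimilarity between information states. -/
def NBisimS {P : Type} (M M' : InqModel P) (n : ℕ) (s : Set M.W) (s' : Set M'.W) : Prop :=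
  StateRel (NBisimW M M' n) s s'

/-- `Z` is a bisimulation between two inquisitive modal models. -/
def IsBisimulation {P : Type} (M M' : InqModel P) (Z : M.W → M'.W → Prop) : Prop :=
  ∀ w w', Z w w' →
    (∀ p : P, w ∈ M.V p ↔ w' ∈ M'.V p) ∧
    (∀ s ∈ M.Sig w, ∃ s' ∈ M'.Sig w', StateRel Z s s') ∧
    (∀ s' ∈ M'.Sig w', ∃ s ∈ M.Sig w, StateRel Z s s')

/-- Bisimilarity of worlds: inclusion in some bisimulation. -/
def BisimW {P : Type} (M M' : InqModel P) (w : M.W) (w' : M'.W) : Prop :=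
  ∃ Z, IsBisimulation M M' Z ∧ Z w w'

/-- Bisimilarity of information states. -/
def BisimS {P : Type} (M M' : InqModel P) (s : Set M.W) (s' : Set M'.W) : Prop :=
  StateRel (BisimW M M') s s'


def InqForm.neg {P : Type} (φ : InqForm P) : InqForm P := φ.impl .bot

variable {P : Type}

/-- Persistence: support is downward closed. -/
theorem persist {M : InqModel P} : ∀ (φ : InqForm P) (s t : Set M.W),
    support M φ s → t ⊆ s → support M φ t
  | .atom p, s, t, h, hts => hts.trans h
  | .bot, s, t, h, hts => by subst h; exact Set.subset_empty_iff.mp hts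
  | .and φ ψ, s, t, h, hts => ⟨persist φ s t h.1 hts, persist ψ s t h.2 hts⟩
  | .impl φ ψ, s, t, h, hts => fun u hu hφ => h u (hu.trans hts) hφ
  | .idisj φ ψ, s, t, h, hts =>
      h.elim (fun h1 => Or.inl (persist φ s t h1 hts)) (fun h1 => Or.inr (persist ψ s t h1 hts))
  | .box φ, s, t, h, hts => fun w hw => h w (hts hw)
  | .boxplus φ, s, t, h, hts => fun w hw => h w (hts hw)

theorem support_empty {M : InqModel P} : ∀ (φ : InqForm P), support M φ (∅ : Set M.W)
  | .atom p => by intro x hx; exact absurd hx (Set.notMem_empty x)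
  | .bot => rfl
  | .and φ ψ => ⟨support_empty φ, support_empty ψ⟩
  | .impl φ ψ => fun t ht _ => by
      have : t = ∅ := Set.subset_empty_iff.mp ht
      subst this; exact support_empty ψ
  | .idisj φ ψ => Or.inl (support_empty φ)
  | .box φ => fun w hw => absurd hw (Set.notMem_empty w)
  | .boxplus φ => fun w hw => absurd hw (Set.notMem_empty w)

/-- A formula is declarative w.r.t. a model if its support is determined worldwise. -/
def Decl (M : InqModel P) (φ : InqForm P) : Prop :=
  ∀ s : Set M.W, support M φ s ↔ ∀ w ∈ s, support M φ {w}


theorem neg_support {M : InqModel P} (φ : InqForm P) (s : Set M.W) :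
    support M φ.neg s ↔ ∀ w ∈ s, ¬ support M φ {w} := by
  constructor
  · intro h w hw hφ
    have := h {w} (Set.singleton_subset_iff.mpr hw) hφ
    exact Set.singleton_ne_empty w this
  · intro h t hts hφ
    by_contra hne
    obtain ⟨w, hw⟩ := Set.nonempty_iff_ne_empty.mpr hne
    exact h w (hts hw) (persist φ t {w} hφ (Set.singleton_subset_iff.mpr hw))

theorem neg_decl {M : InqModel P} (φ : InqForm P) : Decl M φ.neg := by
  intro s
  simp only [neg_support]
  constructor
  · intro h w hw v hv; rw [Set.mem_singleton_iff] at hv; subst hv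
    exact h _ hw
  · intro h w hw; exact h w hw w rfl

theorem neg_truth {M : InqModel P} (φ : InqForm P) (w : M.W) :
    support M φ.neg {w} ↔ ¬ support M φ {w} := by
  rw [neg_support]; simp

def cOr (φ ψ : InqForm P) : InqForm P := ((φ.neg).and (ψ.neg)).neg

def bigCOr : List (InqForm P) → InqForm P
  | [] => .bot
  | φ :: l => cOr φ (bigCOr l)

def bigIOr : List (InqForm P) → InqForm P
  | [] => .bot
  | φ :: l => .idisj φ (bigIOr l)

def bigAnd : List (InqForm P) → InqForm P
  | [] => InqForm.neg .bot
  | φ :: l => .and φ (bigAnd l)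

theorem bot_decl {M : InqModel P} : Decl M (.bot : InqForm P) := by
  intro s
  constructor
  · intro h w hw; subst h; exact absurd hw (Set.notMem_empty w)
  · intro h; by_contra hne
    obtain ⟨w, hw⟩ := Set.nonempty_iff_ne_empty.mpr hne
    exact Set.singleton_ne_empty w (h w hw)

theorem cOr_truth {M : InqModel P} (φ ψ : InqForm P) (w : M.W) :
    support M (cOr φ ψ) {w} ↔ support M φ {w} ∨ support M ψ {w} := by
  rw [cOr, neg_truth]
  show ¬ (support M _ {w} ∧ support M _ {w}) ↔ _
  rw [neg_truth, neg_truth]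
  tauto

theorem bigCOr_decl {M : InqModel P} (l : List (InqForm P)) : Decl M (bigCOr l) := by
  cases l with
  | nil => exact bot_decl
  | cons φ l => exact neg_decl _

theorem bigCOr_truth {M : InqModel P} : ∀ (l : List (InqForm P)) (w : M.W),
    support M (bigCOr l) {w} ↔ ∃ φ ∈ l, support M φ {w}
  | [], w => by
      show ({w} : Set M.W) = ∅ ↔ _
      simp [Set.singleton_ne_empty]
  | φ :: l, w => by
      rw [bigCOr, cOr_truth, bigCOr_truth l]
      simp

theorem bigCOr_support {M : InqModel P} (l : List (InqForm P)) (s : Set M.W) :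
    support M (bigCOr l) s ↔ ∀ w ∈ s, ∃ φ ∈ l, support M φ {w} := by
  rw [bigCOr_decl l s]
  exact forall₂_congr fun w _ => bigCOr_truth l w

theorem bigAnd_support {M : InqModel P} : ∀ (l : List (InqForm P)) (s : Set M.W),
    support M (bigAnd l) s ↔ ∀ φ ∈ l, support M φ s
  | [], s => by
      constructor
      · intro _ φ h; exact absurd h List.not_mem_nil
      · intro _; intro t ht h; exact h
  | φ :: l, s => by
      show support M φ s ∧ support M (bigAnd l) s ↔ _
      rw [bigAnd_support l]
      simp

theorem bigIOr_support {M : InqModel P} : ∀ (l : List (InqForm P)) (s : Set M.W),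
    support M (bigIOr l) s ↔ s = ∅ ∨ ∃ φ ∈ l, support M φ s
  | [], s => by show s = ∅ ↔ _; simp
  | φ :: l, s => by
      show support M φ s ∨ support M (bigIOr l) s ↔ _
      rw [bigIOr_support l]
      constructor
      · rintro (h | h | h)
        · exact Or.inr ⟨φ, by simp, h⟩
        · exact Or.inl h
        · obtain ⟨ψ, hψ, h⟩ := h; exact Or.inr ⟨ψ, by simp [hψ], h⟩
      · rintro (h | ⟨ψ, hψ, h⟩)
        · subst h; exact Or.inl (support_empty φ)
        · rcases List.mem_cons.mp hψ with h1 | h1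
          · subst h1; exact Or.inl h
          · exact Or.inr (Or.inr ⟨ψ, h1, h⟩)


theorem atom_truth {M : InqModel P} (p : P) (w : M.W) :
    support M (.atom p) {w} ↔ w ∈ M.V p := by
  show {w} ⊆ M.V p ↔ _
  simp

theorem and_decl {M : InqModel P} {φ ψ : InqForm P} (hφ : Decl M φ) (hψ : Decl M ψ) :
    Decl M (φ.and ψ) := by
  intro s
  show support M φ s ∧ support M ψ s ↔ ∀ w ∈ s, support M φ {w} ∧ support M ψ {w}
  rw [hφ s, hψ s]
  constructor
  · intro h w hw; exact ⟨h.1 w hw, h.2 w hw⟩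
  · intro h; exact ⟨fun w hw => (h w hw).1, fun w hw => (h w hw).2⟩

theorem boxplus_decl {M : InqModel P} (φ : InqForm P) : Decl M (.boxplus φ) := by
  intro s
  show (∀ w ∈ s, ∀ t ∈ M.Sig w, support M φ t) ↔ _
  constructor
  · intro h w hw v hv; rw [Set.mem_singleton_iff] at hv; subst hv; exact h _ hw
  · intro h w hw; exact h w hw w rfl

theorem boxplus_truth {M : InqModel P} (φ : InqForm P) (w : M.W) :
    support M (.boxplus φ) {w} ↔ ∀ t ∈ M.Sig w, support M φ t := by
  show (∀ v ∈ ({w} : Set M.W), _) ↔ _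
  simp

theorem bigAnd_decl {M : InqModel P} (l : List (InqForm P))
    (h : ∀ φ ∈ l, Decl M φ) : Decl M (bigAnd l) := by
  intro s
  rw [bigAnd_support]
  constructor
  · intro hs w hw
    rw [bigAnd_support]
    intro φ hφ
    refine (h φ hφ {w}).mpr (fun v hv => ?_)
    rw [Set.mem_singleton_iff] at hv; subst hv
    exact (h φ hφ s).mp (hs φ hφ) _ hw
  · intro hs φ hφ
    rw [h φ hφ s]
    intro w hw
    have := hs w hw
    rw [bigAnd_support] at this
    exact this φ hφ

/-- Empty state belongs to every `Σ(w)`. -/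
theorem mem_Sig_empty (M : InqModel P) (w : M.W) : (∅ : Set M.W) ∈ M.Sig w := by
  obtain ⟨s, hs⟩ := M.Sig_nonempty w
  exact M.Sig_downward w s hs ∅ (Set.empty_subset s)

/-- The type of `n`-types of worlds. -/
def TW (P : Type) : ℕ → Type
  | 0 => Set P
  | n+1 => Set P × Set (Set (TW P n))

instance TW.finite (P : Type) [Finite P] : ∀ n, Finite (TW P n)
  | 0 => by unfold TW; infer_instance
  | n+1 => by have := TW.finite P n; unfold TW; infer_instance

/-- The `n`-type of a world. -/
def wtype (M : InqModel P) : (n : ℕ) → M.W → TW P n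
  | 0, w => {p | w ∈ M.V p}
  | n+1, w => ({p | w ∈ M.V p}, {S | ∃ t ∈ M.Sig w, S = wtype M n '' t})

/-- Coherence of an abstract type. -/
def coh (P : Type) : (n : ℕ) → TW P n → Prop
  | 0, _ => True
  | n+1, τ => (∅ ∈ τ.2) ∧ (∀ S ∈ τ.2, ∀ S' ⊆ S, S' ∈ τ.2) ∧
      (∀ S ∈ τ.2, ∀ τ' ∈ S, coh P n τ')

theorem wtype_mem (M : InqModel P) (n : ℕ) (w : M.W) (S : Set (TW P n)) :
    S ∈ (wtype M (n+1) w).2 ↔ ∃ t ∈ M.Sig w, S = wtype M n '' t := Iff.rfl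

/-- Realizing an included state type by restriction. -/
theorem stype_restrict (M : InqModel P) (n : ℕ) (w : M.W) (t : Set M.W) (ht : t ∈ M.Sig w)
    (S' : Set (TW P n)) (hS' : S' ⊆ wtype M n '' t) : S' ∈ (wtype M (n+1) w).2 := by
  rw [wtype_mem]
  refine ⟨t ∩ {u | wtype M n u ∈ S'}, M.Sig_downward w t ht _ Set.inter_subset_left, ?_⟩
  apply Set.eq_of_subset_of_subset
  · intro τ' hτ'
    obtain ⟨u, hut, rfl⟩ := hS' hτ'
    exact ⟨u, ⟨hut, hτ'⟩, rfl⟩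
  · rintro τ' ⟨u, ⟨hut, hu⟩, rfl⟩
    exact hu

theorem wtype_coh (M : InqModel P) : ∀ (n : ℕ) (w : M.W), coh P n (wtype M n w)
  | 0, w => trivial
  | n+1, w => by
    refine ⟨(wtype_mem M n w ∅).mpr ⟨∅, mem_Sig_empty M w, by simp⟩, ?_, ?_⟩
    · intro S hS S' hS'
      rw [wtype_mem] at hS
      obtain ⟨t, ht, rfl⟩ := hS
      exact stype_restrict M n w t ht S' hS'
    · intro S hS τ' hτ'
      rw [wtype_mem] at hS
      obtain ⟨t, ht, rfl⟩ := hS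
      obtain ⟨u, hu, rfl⟩ := hτ'
      exact wtype_coh M n u

noncomputable def enumList (α : Type) [Finite α] : List α :=
  letI := Fintype.ofFinite α
  (Finset.univ (α := α)).toList

theorem mem_enumList {α : Type} [Finite α] (a : α) : a ∈ enumList α := by
  unfold enumList
  simp

/-- Classically decide. -/
noncomputable def pdec (p : Prop) : Bool := @decide p (Classical.propDecidable p)

theorem pdec_iff (p : Prop) : pdec p = true ↔ p := by
  unfold pdec
  exact @decide_eq_true_iff p (Classical.propDecidable p)

noncomputable def chiAtoms [Finite P] (α : Set P) : InqForm P :=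
  bigAnd ((enumList P).map fun p => if pdec (p ∈ α) then .atom p else (InqForm.atom p).neg)

theorem chiAtoms_support [Finite P] {M : InqModel P} (α : Set P) (s : Set M.W) :
    support M (chiAtoms α) s ↔ ∀ v ∈ s, {p | v ∈ M.V p} = α := by
  rw [chiAtoms, bigAnd_support]
  constructor
  · intro h v hv
    ext p
    have := h (if pdec (p ∈ α) then .atom p else (InqForm.atom p).neg)
      (List.mem_map.mpr ⟨p, mem_enumList p, rfl⟩)
    by_cases hp : p ∈ α
    · rw [if_pos ((pdec_iff _).mpr hp)] at this
      exact ⟨fun _ => hp, fun _ => this hv⟩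
    · rw [if_neg (by simp [pdec_iff, hp])] at this
      rw [neg_support] at this
      have := this v hv
      rw [atom_truth] at this
      simp only [Set.mem_setOf_eq]
      exact ⟨fun hvp => absurd hvp this, fun hpa => absurd hpa hp⟩
  · intro h φ hφ
    obtain ⟨p, _, rfl⟩ := List.mem_map.mp hφ
    by_cases hp : p ∈ α
    · rw [if_pos ((pdec_iff _).mpr hp)]
      intro v hv
      have := h v hv
      rw [Set.ext_iff] at this
      exact (this p).mpr hp
    · rw [if_neg (by simp [pdec_iff, hp])]
      rw [neg_support]
      intro v hv
      rw [atom_truth]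
      intro hvp
      exact hp ((Set.ext_iff.mp (h v hv) p).mp hvp)

/-- Characteristic formula of a state type, given world formulas. -/
noncomputable def chiSg [Finite P] (n : ℕ) (f : TW P n → InqForm P) (S : Set (TW P n)) :
    InqForm P :=
  bigCOr (((enumList (TW P n)).filter (fun τ' => pdec (τ' ∈ S ∧ coh P n τ'))).map f)

/-- Characteristic formula of a world type. -/
noncomputable def chiW [Finite P] : (n : ℕ) → TW P n → InqForm P
  | 0, α => chiAtoms α
  | n+1, τ =>
    (chiAtoms τ.1).and <|
      (InqForm.boxplus (bigIOr
        (((enumList (Set (TW P n))).filter (fun S => pdec (S ∈ τ.2))).map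
          (chiSg n (chiW n))))).and
      (bigAnd (((enumList (Set (TW P n))).filter (fun S => pdec (S ∈ τ.2 ∧ S ≠ ∅))).map
        (fun S =>
          (InqForm.boxplus (bigIOr
            (((enumList (TW P n)).filter (fun τ' => pdec (τ' ∈ S))).map
              (fun τ' => chiSg n (chiW n) (Set.univ \ {τ'}))))).neg)))

/-- The semantics of `chiSg n (chiW n)`, given the spec of `chiW n`. -/
theorem chiSg_support [Finite P] {n : ℕ}
    (hspec : ∀ (τ : TW P n), coh P n τ → ∀ (M' : InqModel P) (s : Set M'.W),
      support M' (chiW n τ) s ↔ ∀ v ∈ s, wtype M' n v = τ)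
    (S : Set (TW P n)) (M' : InqModel P) (t : Set M'.W) :
    support M' (chiSg n (chiW n) S) t ↔ ∀ u ∈ t, wtype M' n u ∈ S := by
  rw [chiSg, bigCOr_support]
  constructor
  · intro h u hu
    obtain ⟨φ, hφ, hsup⟩ := h u hu
    obtain ⟨τ', hτ', rfl⟩ := List.mem_map.mp hφ
    obtain ⟨-, hc⟩ := List.mem_filter.mp hτ'
    obtain ⟨hmem, hcoh⟩ := (pdec_iff _).mp hc
    have := (hspec τ' hcoh M' {u}).mp hsup u rfl
    rw [this]; exact hmem
  · intro h u hu
    refine ⟨chiW n (wtype M' n u), ?_, ?_⟩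
    · apply List.mem_map.mpr
      refine ⟨wtype M' n u, List.mem_filter.mpr ⟨mem_enumList _, ?_⟩, rfl⟩
      exact (pdec_iff _).mpr ⟨h u hu, wtype_coh M' n u⟩
    · exact (hspec _ (wtype_coh M' n u) M' {u}).mpr (fun v hv => by
        rw [Set.mem_singleton_iff] at hv; subst hv; rfl)

theorem and_support {M : InqModel P} (φ ψ : InqForm P) (s : Set M.W) :
    support M (φ.and ψ) s ↔ support M φ s ∧ support M ψ s := Iff.rfl

theorem atom_decl {M : InqModel P} (p : P) : Decl M (.atom p) := by
  intro s
  show s ⊆ M.V p ↔ _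
  simp only [atom_truth]
  exact Iff.rfl

theorem chiAtoms_decl [Finite P] {M : InqModel P} (α : Set P) : Decl M (chiAtoms α) := by
  apply bigAnd_decl
  intro φ hφ
  obtain ⟨p, -, rfl⟩ := List.mem_map.mp hφ
  split
  · exact atom_decl p
  · exact neg_decl _

set_option maxHeartbeats 1000000 in
theorem chiW_spec [Finite P] : ∀ (n : ℕ) (τ : TW P n), coh P n τ →
    ∀ (M' : InqModel P) (s : Set M'.W),
    support M' (chiW n τ) s ↔ ∀ v ∈ s, wtype M' n v = τ
  | 0, α, _, M', s => chiAtoms_support α s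
  | n+1, τ, hc, M', s => by
    have IH : ∀ (τ' : TW P n), coh P n τ' → ∀ (M'' : InqModel P) (t : Set M''.W),
        support M'' (chiW n τ') t ↔ ∀ v ∈ t, wtype M'' n v = τ' :=
      fun τ' h => chiW_spec n τ' h
    have hS := chiSg_support IH
    obtain ⟨hem, hdc, -⟩ := hc
    set Ψ : InqForm P := bigIOr
        (((enumList (Set (TW P n))).filter (fun S => pdec (S ∈ τ.2))).map
          (chiSg n (chiW n))) with hΨ
    set Θ : InqForm P := bigAnd
        (((enumList (Set (TW P n))).filter (fun S => pdec (S ∈ τ.2 ∧ S ≠ ∅))).map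
        (fun S =>
          (InqForm.boxplus (bigIOr
            (((enumList (TW P n)).filter (fun τ' => pdec (τ' ∈ S))).map
              (fun τ' => chiSg n (chiW n) (Set.univ \ {τ'}))))).neg)) with hΘ
    have hch : chiW (n+1) τ = (chiAtoms τ.1).and ((InqForm.boxplus Ψ).and Θ) := by
      rw [chiW]
    have hdecl : Decl M' (chiW (n+1) τ) := by
      rw [hch]
      apply and_decl (chiAtoms_decl _)
      apply and_decl (boxplus_decl _)
      apply bigAnd_decl
      intro φ hφ
      obtain ⟨S, -, rfl⟩ := List.mem_map.mp hφ
      exact neg_decl _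
    -- support of Ψ at an arbitrary state
    have hΨt : ∀ t : Set M'.W, support M' Ψ t ↔
        (t = ∅ ∨ ∃ S ∈ τ.2, ∀ u ∈ t, wtype M' n u ∈ S) := by
      intro t
      rw [hΨ, bigIOr_support]
      constructor
      · rintro (h | ⟨φ, hφ, hsup⟩)
        · exact Or.inl h
        · obtain ⟨S, hmem, rfl⟩ := List.mem_map.mp hφ
          obtain ⟨-, hp⟩ := List.mem_filter.mp hmem
          exact Or.inr ⟨S, (pdec_iff _).mp hp, (hS S M' t).mp hsup⟩
      · rintro (h | ⟨S, hSmem, h⟩)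
        · exact Or.inl h
        · refine Or.inr ⟨chiSg n (chiW n) S, List.mem_map.mpr
            ⟨S, List.mem_filter.mpr ⟨mem_enumList S, (pdec_iff _).mpr hSmem⟩, rfl⟩,
            (hS S M' t).mpr h⟩
    -- support of Θ at a singleton
    have hΘv : ∀ v : M'.W, support M' Θ {v} ↔
        ∀ S ∈ τ.2, S ≠ ∅ → ∃ t ∈ M'.Sig v, t ≠ ∅ ∧ S ⊆ wtype M' n '' t := by
      intro v
      rw [hΘ, bigAnd_support]
      constructor
      · intro h S hSmem hSne
        have hφ := h _ (List.mem_map.mpr ⟨S, List.mem_filter.mpr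
          ⟨mem_enumList S, (pdec_iff _).mpr ⟨hSmem, hSne⟩⟩, rfl⟩)
        rw [neg_truth, boxplus_truth] at hφ
        push_neg at hφ
        obtain ⟨t, ht, hX⟩ := hφ
        rw [bigIOr_support] at hX
        push_neg at hX
        obtain ⟨htne, hX⟩ := hX
        refine ⟨t, ht, Set.nonempty_iff_ne_empty.mp htne, ?_⟩
        intro τ' hτ'
        have hx := hX (chiSg n (chiW n) (Set.univ \ {τ'})) (List.mem_map.mpr
          ⟨τ', List.mem_filter.mpr ⟨mem_enumList τ', (pdec_iff _).mpr hτ'⟩, rfl⟩)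
        rw [hS] at hx
        push_neg at hx
        obtain ⟨u, hu, hne⟩ := hx
        simp only [Set.mem_diff, Set.mem_univ, true_and, Set.mem_singleton_iff,
          not_not] at hne
        exact ⟨u, hu, hne⟩
      · intro h φ hφ
        obtain ⟨S, hmem, rfl⟩ := List.mem_map.mp hφ
        obtain ⟨-, hp⟩ := List.mem_filter.mp hmem
        obtain ⟨hSmem, hSne⟩ := (pdec_iff _).mp hp
        obtain ⟨t, ht, htne, hsub⟩ := h S hSmem hSne
        rw [neg_truth, boxplus_truth]
        push_neg
        refine ⟨t, ht, ?_⟩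
        rw [bigIOr_support]
        push_neg
        refine ⟨Set.nonempty_iff_ne_empty.mpr htne, ?_⟩
        intro ψ hψ
        obtain ⟨τ', hτ'mem, rfl⟩ := List.mem_map.mp hψ
        obtain ⟨-, hp'⟩ := List.mem_filter.mp hτ'mem
        have hτ'S : τ' ∈ S := (pdec_iff _).mp hp'
        rw [hS]
        push_neg
        obtain ⟨u, hu, huw⟩ := hsub hτ'S
        refine ⟨u, hu, ?_⟩
        simp [huw]
    -- singleton characterization
    have key : ∀ v : M'.W, support M' (chiW (n+1) τ) {v} ↔ wtype M' (n+1) v = τ := by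
      intro v
      rw [hch, and_support, and_support, boxplus_truth, chiAtoms_support, hΘv]
      simp only [Set.mem_singleton_iff, forall_eq]
      refine Iff.trans ?_ Prod.ext_iff.symm
      constructor
      · rintro ⟨h1, h2, h3⟩
        refine ⟨h1, ?_⟩
        apply Set.eq_of_subset_of_subset
        · intro S hSmem
          rw [wtype_mem] at hSmem
          obtain ⟨t, ht, rfl⟩ := hSmem
          have := (hΨt t).mp (h2 t ht)
          rcases this with h | ⟨S', hS'mem, h⟩
          · subst h
            rw [Set.image_empty]
            exact hem
          · exact hdc S' hS'mem _ (fun τ' hτ' => by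
              obtain ⟨u, hu, rfl⟩ := hτ'
              exact h u hu)
        · intro S hSmem
          by_cases hSe : S = ∅
          · subst hSe
            rw [wtype_mem]
            exact ⟨∅, mem_Sig_empty M' v, by rw [Set.image_empty]⟩
          · obtain ⟨t, ht, -, hsub⟩ := h3 S hSmem hSe
            exact stype_restrict M' n v t ht S hsub
      · rintro ⟨h1, h2⟩
        refine ⟨h1, ?_, ?_⟩
        · intro t ht
          rw [hΨt]
          refine Or.inr ⟨wtype M' n '' t, ?_, fun u hu => ⟨u, hu, rfl⟩⟩
          rw [← h2]
          rw [wtype_mem]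
          exact ⟨t, ht, rfl⟩
        · intro S hSmem hSne
          rw [← h2, wtype_mem] at hSmem
          obtain ⟨t, ht, rfl⟩ := hSmem
          refine ⟨t, ht, ?_, subset_refl _⟩
          intro h
          subst h
          rw [Set.image_empty] at hSne
          exact hSne rfl
    -- conclude via declarativity
    rw [hdecl s]
    exact forall₂_congr (fun v _ => key v)

theorem nbisim_iff_wtype : ∀ (n : ℕ) (M M' : InqModel P) (w : M.W) (w' : M'.W),
    NBisimW M M' n w w' ↔ wtype M n w = wtype M' n w'
  | 0, M, M', w, w' => by
    show (∀ p, w ∈ M.V p ↔ w' ∈ M'.V p) ↔ ({p | w ∈ M.V p} : Set P) = {p | w' ∈ M'.V p}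
    rw [Set.ext_iff]
    simp
  | n+1, M, M', w, w' => by
    have IH := fun (u : M.W) (u' : M'.W) => nbisim_iff_wtype n M M' u u'
    have hsr : ∀ (s : Set M.W) (s' : Set M'.W),
        StateRel (NBisimW M M' n) s s' ↔ wtype M n '' s = wtype M' n '' s' := by
      intro s s'
      constructor
      · rintro ⟨h1, h2⟩
        apply Set.eq_of_subset_of_subset
        · rintro τ ⟨u, hu, rfl⟩
          obtain ⟨u', hu', hb⟩ := h1 u hu
          exact ⟨u', hu', ((IH u u').mp hb).symm⟩
        · rintro τ ⟨u', hu', rfl⟩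
          obtain ⟨u, hu, hb⟩ := h2 u' hu'
          exact ⟨u, hu, (IH u u').mp hb⟩
      · intro h
        constructor
        · intro u hu
          have : wtype M n u ∈ wtype M' n '' s' := h ▸ ⟨u, hu, rfl⟩
          obtain ⟨u', hu', he⟩ := this
          exact ⟨u', hu', (IH u u').mpr he.symm⟩
        · intro u' hu'
          have : wtype M' n u' ∈ wtype M n '' s := by rw [h]; exact ⟨u', hu', rfl⟩
          obtain ⟨u, hu, he⟩ := this
          exact ⟨u, hu, (IH u u').mpr he⟩
    show ((∀ p, w ∈ M.V p ↔ w' ∈ M'.V p) ∧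
        (∀ s ∈ M.Sig w, ∃ s' ∈ M'.Sig w', StateRel (NBisimW M M' n) s s') ∧
        (∀ s' ∈ M'.Sig w', ∃ s ∈ M.Sig w, StateRel (NBisimW M M' n) s s')) ↔ _
    refine Iff.trans ?_ Prod.ext_iff.symm
    constructor
    · rintro ⟨h1, h2, h3⟩
      constructor
      · show ({p | w ∈ M.V p} : Set P) = {p | w' ∈ M'.V p}
        rw [Set.ext_iff]; simpa using h1
      · show (wtype M (n+1) w).2 = (wtype M' (n+1) w').2
        apply Set.eq_of_subset_of_subset
        · intro S hs
          rw [wtype_mem] at hs ⊢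
          obtain ⟨t, ht, rfl⟩ := hs
          obtain ⟨t', ht', hrel⟩ := h2 t ht
          exact ⟨t', ht', (hsr t t').mp hrel⟩
        · intro S hs
          rw [wtype_mem] at hs ⊢
          obtain ⟨t', ht', rfl⟩ := hs
          obtain ⟨t, ht, hrel⟩ := h3 t' ht'
          exact ⟨t, ht, ((hsr t t').mp hrel).symm⟩
    · rintro ⟨h1, h2⟩
      refine ⟨?_, ?_, ?_⟩
      · intro p
        have := Set.ext_iff.mp h1 p
        exact this
      · intro t ht
        have : wtype M n '' t ∈ (wtype M' (n+1) w').2 := by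
          rw [← h2, wtype_mem]; exact ⟨t, ht, rfl⟩
        rw [wtype_mem] at this
        obtain ⟨t', ht', he⟩ := this
        exact ⟨t', ht', (hsr t t').mpr he⟩
      · intro t' ht'
        have : wtype M' n '' t' ∈ (wtype M (n+1) w).2 := by
          rw [h2, wtype_mem]; exact ⟨t', ht', rfl⟩
        rw [wtype_mem] at this
        obtain ⟨t, ht, he⟩ := this
        exact ⟨t, ht, (hsr t t').mpr he.symm⟩

theorem nbisimW_symm {M M' : InqModel P} {n : ℕ} {w : M.W} {w' : M'.W}
    (h : NBisimW M M' n w w') : NBisimW M' M n w' w :=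
  (nbisim_iff_wtype n M' M w' w).mpr ((nbisim_iff_wtype n M M' w w').mp h).symm

theorem nbisimS_symm {M M' : InqModel P} {n : ℕ} {s : Set M.W} {s' : Set M'.W}
    (h : NBisimS M M' n s s') : NBisimS M' M n s' s :=
  ⟨fun u' hu' => (h.2 u' hu').imp (fun u ⟨hu, hb⟩ => ⟨hu, nbisimW_symm hb⟩),
   fun u hu => (h.1 u hu).imp (fun u' ⟨hu', hb⟩ => ⟨hu', nbisimW_symm hb⟩)⟩

theorem nbisim_atoms {M M' : InqModel P} {n : ℕ} {w : M.W} {w' : M'.W}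
    (h : NBisimW M M' n w w') : ∀ p : P, w ∈ M.V p ↔ w' ∈ M'.V p := by
  cases n with
  | zero => exact h
  | succ n => exact h.1

theorem nbisimS_sub {M M' : InqModel P} {n : ℕ} {s : Set M.W} {s' : Set M'.W}
    (h : NBisimS M M' n s s') {t : Set M.W} (hts : t ⊆ s) :
    ∃ t' ⊆ s', NBisimS M M' n t t' := by
  refine ⟨{u' ∈ s' | ∃ u ∈ t, NBisimW M M' n u u'}, fun u' hu' => hu'.1, ?_, ?_⟩
  · intro u hu
    obtain ⟨u', hu', hb⟩ := h.1 u (hts hu)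
    exact ⟨u', ⟨hu', u, hu, hb⟩, hb⟩
  · rintro u' ⟨-, u, hu, hb⟩
    exact ⟨u, hu, hb⟩

theorem nbisim_sigma {M M' : InqModel P} {n : ℕ} {w : M.W} {w' : M'.W}
    (h : NBisimW M M' (n+1) w w') : NBisimS M M' n (M.sigma w) (M'.sigma w') := by
  obtain ⟨-, h2, h3⟩ := h
  constructor
  · rintro u ⟨t, ht, hut⟩
    obtain ⟨t', ht', hrel⟩ := h2 t ht
    obtain ⟨u', hu', hb⟩ := hrel.1 u hut
    exact ⟨u', ⟨t', ht', hu'⟩, hb⟩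
  · rintro u' ⟨t', ht', hut'⟩
    obtain ⟨t, ht, hrel⟩ := h3 t' ht'
    obtain ⟨u, hu, hb⟩ := hrel.2 u' hut'
    exact ⟨u, ⟨t, ht, hu⟩, hb⟩

theorem support_invariant : ∀ (φ : InqForm P) (n : ℕ), mdepth φ ≤ n →
    ∀ (M M' : InqModel P) (s : Set M.W) (s' : Set M'.W),
    NBisimS M M' n s s' → (support M φ s ↔ support M' φ s')
  | .atom p, n, _, M, M', s, s', h => by
    show s ⊆ M.V p ↔ s' ⊆ M'.V p
    constructor
    · intro hs u' hu'
      obtain ⟨u, hu, hb⟩ := h.2 u' hu'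
      exact (nbisim_atoms hb p).mp (hs hu)
    · intro hs u hu
      obtain ⟨u', hu', hb⟩ := h.1 u hu
      exact (nbisim_atoms hb p).mpr (hs hu')
  | .bot, n, _, M, M', s, s', h => by
    show s = ∅ ↔ s' = ∅
    constructor
    · intro hs
      rw [Set.eq_empty_iff_forall_notMem] at hs ⊢
      intro u' hu'
      obtain ⟨u, hu, -⟩ := h.2 u' hu'
      exact hs u hu
    · intro hs
      rw [Set.eq_empty_iff_forall_notMem] at hs ⊢
      intro u hu
      obtain ⟨u', hu', -⟩ := h.1 u hu
      exact hs u' hu'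
  | .and φ ψ, n, hd, M, M', s, s', h => by
    rw [mdepth, max_le_iff] at hd
    exact and_congr (support_invariant φ n hd.1 M M' s s' h)
      (support_invariant ψ n hd.2 M M' s s' h)
  | .idisj φ ψ, n, hd, M, M', s, s', h => by
    rw [mdepth, max_le_iff] at hd
    exact or_congr (support_invariant φ n hd.1 M M' s s' h)
      (support_invariant ψ n hd.2 M M' s s' h)
  | .impl φ ψ, n, hd, M, M', s, s', h => by
    rw [mdepth, max_le_iff] at hd
    constructor
    · intro hs t' ht' hφ'
      obtain ⟨t, hts, hrel⟩ := nbisimS_sub (nbisimS_symm h) ht'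
      have hrel' := nbisimS_symm hrel
      exact (support_invariant ψ n hd.2 M M' t t' hrel').mp
        (hs t hts ((support_invariant φ n hd.1 M M' t t' hrel').mpr hφ'))
    · intro hs t hts hφ
      obtain ⟨t', ht's, hrel⟩ := nbisimS_sub h hts
      exact (support_invariant ψ n hd.2 M M' t t' hrel).mpr
        (hs t' ht's ((support_invariant φ n hd.1 M M' t t' hrel).mp hφ))
  | .box φ, n, hd, M, M', s, s', h => by
    rw [mdepth] at hd
    match n, hd with
    | m+1, hd =>
      have hdm : mdepth φ ≤ m := Nat.succ_le_succ_iff.mp hd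
      show (∀ w ∈ s, support M φ (M.sigma w)) ↔ (∀ w' ∈ s', support M' φ (M'.sigma w'))
      constructor
      · intro hs w' hw'
        obtain ⟨w, hw, hb⟩ := h.2 w' hw'
        exact (support_invariant φ m hdm M M' _ _ (nbisim_sigma hb)).mp (hs w hw)
      · intro hs w hw
        obtain ⟨w', hw', hb⟩ := h.1 w hw
        exact (support_invariant φ m hdm M M' _ _ (nbisim_sigma hb)).mpr (hs w' hw')
  | .boxplus φ, n, hd, M, M', s, s', h => by
    rw [mdepth] at hd
    match n, hd with
    | m+1, hd =>
      have hdm : mdepth φ ≤ m := Nat.succ_le_succ_iff.mp hd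
      show (∀ w ∈ s, ∀ t ∈ M.Sig w, support M φ t) ↔
        (∀ w' ∈ s', ∀ t' ∈ M'.Sig w', support M' φ t')
      constructor
      · intro hs w' hw' t' ht'
        obtain ⟨w, hw, hb⟩ := h.2 w' hw'
        obtain ⟨-, -, h3⟩ := hb
        obtain ⟨t, ht, hrel⟩ := h3 t' ht'
        exact (support_invariant φ m hdm M M' t t' hrel).mp (hs w hw t ht)
      · intro hs w hw t ht
        obtain ⟨w', hw', hb⟩ := h.1 w hw
        obtain ⟨-, h2, -⟩ := hb
        obtain ⟨t', ht', hrel⟩ := h2 t ht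
        exact (support_invariant φ m hdm M M' t t' hrel).mpr (hs w' hw' t' ht')



/-- **Definability of classes of world-pointed models**: over a finite set of
atomic propositions, a class of world-pointed inquisitive modal models is
definable in InqML iff it is closed under `~^n` for some `n`. -/
theorem definability_world_classes {P : Type} [Finite P]
    (C : (M : InqModel P) → M.W → Prop) :
    (∃ φ : InqForm P, ∀ (M : InqModel P) (w : M.W), C M w ↔ truth M w φ) ↔
    (∃ n : ℕ, ∀ (M M' : InqModel P) (w : M.W) (w' : M'.W),
      C M w → NBisimW M M' n w w' → C M' w') := by

  constructor
  · rintro ⟨φ, hφ⟩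
    refine ⟨mdepth φ, ?_⟩
    intro M M' w w' hC hb
    have hsing : NBisimS M M' (mdepth φ) {w} {w'} := by
      constructor
      · intro u hu
        rw [Set.mem_singleton_iff] at hu; subst hu
        exact ⟨w', rfl, hb⟩
      · intro u' hu'
        rw [Set.mem_singleton_iff] at hu'; subst hu'
        exact ⟨w, rfl, hb⟩
    rw [hφ M' w']
    rw [hφ M w] at hC
    exact (support_invariant φ (mdepth φ) le_rfl M M' {w} {w'} hsing).mp hC
  · rintro ⟨n, hcl⟩
    classical
    refine ⟨bigIOr (((enumList (TW P n)).filter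
      (fun τ => pdec (∃ (M : InqModel P) (w : M.W), C M w ∧ wtype M n w = τ))).map
      (chiW n)), ?_⟩
    intro M w
    rw [truth, bigIOr_support]
    constructor
    · intro hC
      refine Or.inr ⟨chiW n (wtype M n w), List.mem_map.mpr
        ⟨wtype M n w, List.mem_filter.mpr ⟨mem_enumList _,
          (pdec_iff _).mpr ⟨M, w, hC, rfl⟩⟩, rfl⟩, ?_⟩
      refine (chiW_spec n _ (wtype_coh M n w) M {w}).mpr ?_
      intro v hv
      rw [Set.mem_singleton_iff] at hv; subst hv; rfl
    · rintro (h | ⟨ψ, hψ, hsup⟩)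
      · exact absurd h (Set.singleton_ne_empty w)
      · obtain ⟨τ, hτ, rfl⟩ := List.mem_map.mp hψ
        obtain ⟨-, hp⟩ := List.mem_filter.mp hτ
        obtain ⟨M₀, w₀, hC₀, hw₀⟩ := (pdec_iff _).mp hp
        subst hw₀
        have := (chiW_spec n _ (wtype_coh M₀ n w₀) M {w}).mp hsup w rfl
        exact hcl M₀ M w₀ w hC₀ ((nbisim_iff_wtype n M₀ M w₀ w).mpr this.symm)
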